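/- arXiv:math/9908154 — 4 statements merged into one kernel-verified Lean document; each statement's English description precedes it below -/
import Mathlib

section
/- Let ω ∈ L^1(D), let f* ∈ A^1, and let g* ∈ L^∞(D) annihilate A^1 with ‖g*‖_∞ ≤ 1. Then the following are equivalent: (a) f* is a best approximant to ω in A^1 and |∫_D g* ω dA| = inf{‖ω − f‖_1 : f ∈ A^1}; (b) there exists α ∈ ℝ such that e^{iα} g*(z)(ω(z) − f*(z)) = |ω(z) − f*(z)| for almost every z ∈ D. -/
open MeasureTheory Metric Complex
open scoped ENNReal

/-- The normalized area measure `dA = (1/π) dx dy` on the open unit disk. -/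
noncomputable def dA : Measure ℂ :=
  (ENNReal.ofReal (1 / Real.pi)) • ((volume : Measure ℂ).restrict (ball (0 : ℂ) 1))

/-- Membership in the Bergman space `A^p`. -/
def MemAp (p : ℝ) (f : ℂ → ℂ) : Prop :=
  DifferentiableOn ℂ f (ball (0 : ℂ) 1) ∧ MemLp f (ENNReal.ofReal p) dA

lemma exp_neg_arg_mul_self (w : ℂ) :
    Complex.exp ((-w.arg : ℝ) * Complex.I) * w = (‖w‖ : ℝ) := by
  set a : ℝ := w.arg with ha
  set r : ℝ := ‖w‖ with hr
  have h2 : (r : ℂ) * Complex.exp (a * Complex.I) = w := Complex.norm_mul_exp_arg_mul_I w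
  rw [← h2, mul_comm ((r : ℂ)) _, ← mul_assoc, ← Complex.exp_add,
    show ((-a : ℝ) : ℂ) * Complex.I + (a : ℝ) * Complex.I = 0 by push_cast; ring,
    Complex.exp_zero, one_mul]

set_option maxHeartbeats 1600000 in
/-- Duality characterization of best approximation in `A^1` (Theorem 2.2, case `p = 1`). -/
theorem stmt_1 (ω : ℂ → ℂ) (hω : MemLp ω 1 dA)
    (fstar : ℂ → ℂ) (hf : MemAp 1 fstar)
    (gstar : ℂ → ℂ) (hgmem : MemLp gstar ⊤ dA) (hgnorm : eLpNorm gstar ⊤ dA ≤ 1)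
    (hgann : ∀ f : ℂ → ℂ, MemAp 1 f → ∫ z, f z * gstar z ∂dA = 0) :
    ((eLpNorm (ω - fstar) 1 dA
        = ⨅ f : {f : ℂ → ℂ // MemAp 1 f}, eLpNorm (ω - f.1) 1 dA) ∧
      ENNReal.ofReal ‖∫ z, gstar z * ω z ∂dA‖
        = ⨅ f : {f : ℂ → ℂ // MemAp 1 f}, eLpNorm (ω - f.1) 1 dA)
    ↔ (∃ α : ℝ, ∀ᵐ z ∂dA,
        Complex.exp (α * Complex.I) * gstar z * (ω z - fstar z)
          = ((‖ω z - fstar z‖ : ℝ) : ℂ)) := by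
  have hgm : AEStronglyMeasurable gstar dA := hgmem.aestronglyMeasurable
  -- a.e. bound on gstar
  have hgb : ∀ᵐ z ∂dA, ‖gstar z‖ ≤ 1 := by
    filter_upwards [enorm_ae_le_eLpNormEssSup gstar dA] with z hz
    have h1 : (‖gstar z‖₊ : ℝ≥0∞) ≤ 1 := hz.trans (by rwa [← eLpNorm_exponent_top])
    have h2 : ‖gstar z‖₊ ≤ 1 := by exact_mod_cast h1
    exact_mod_cast h2
  have hωi : Integrable ω dA := memLp_one_iff_integrable.mp hω
  have hApInt : ∀ f : ℂ → ℂ, MemAp 1 f → Integrable f dA := by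
    intro f hfA
    have := hfA.2
    rw [ENNReal.ofReal_one] at this
    exact memLp_one_iff_integrable.mp this
  have hfi : Integrable fstar dA := hApInt fstar hf
  -- multiplication by gstar preserves integrability
  have hint : ∀ f : ℂ → ℂ, Integrable f dA → Integrable (fun z => gstar z * f z) dA :=
    fun f hf' => hf'.bdd_mul hgm hgb
  -- eLpNorm in terms of Bochner integral
  have hsnorm : ∀ f : ℂ → ℂ, Integrable f dA →
      eLpNorm f 1 dA = ENNReal.ofReal (∫ z, ‖f z‖ ∂dA) := by
    intro f hf'
    rw [eLpNorm_one_eq_lintegral_enorm, ← ofReal_integral_norm_eq_lintegral_enorm hf']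
  -- shifting by a Bergman function does not change the pairing
  have hshift : ∀ f : ℂ → ℂ, MemAp 1 f →
      ∫ z, gstar z * (ω z - f z) ∂dA = ∫ z, gstar z * ω z ∂dA := by
    intro f hfA
    have h1 : Integrable (fun z => gstar z * ω z) dA := hint ω hωi
    have h2 : Integrable (fun z => gstar z * f z) dA := hint f (hApInt f hfA)
    have h3 : ∫ z, gstar z * f z ∂dA = 0 := by
      rw [← hgann f hfA]; simp_rw [mul_comm]
    calc ∫ z, gstar z * (ω z - f z) ∂dA
        = ∫ z, (gstar z * ω z - gstar z * f z) ∂dA := by simp_rw [mul_sub]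
      _ = (∫ z, gstar z * ω z ∂dA) - ∫ z, gstar z * f z ∂dA := integral_sub h1 h2
      _ = ∫ z, gstar z * ω z ∂dA := by rw [h3, sub_zero]
  -- the fundamental duality bound
  have hbound : ∀ f : ℂ → ℂ, MemAp 1 f →
      ENNReal.ofReal ‖∫ z, gstar z * ω z ∂dA‖ ≤ eLpNorm (ω - f) 1 dA := by
    intro f hfA
    have hωf : Integrable (ω - f) dA := hωi.sub (hApInt f hfA)
    have hωf' : Integrable (fun z => ω z - f z) dA := hωf
    have hgi : Integrable (fun z => gstar z * (ω z - f z)) dA := hint _ hωf'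
    rw [hsnorm _ hωf, ← hshift f hfA]
    apply ENNReal.ofReal_le_ofReal
    calc ‖∫ z, gstar z * (ω z - f z) ∂dA‖
        ≤ ∫ z, ‖gstar z * (ω z - f z)‖ ∂dA := norm_integral_le_integral_norm _
      _ ≤ ∫ z, ‖(ω - f) z‖ ∂dA := by
          apply integral_mono_ae hgi.norm hωf.norm
          filter_upwards [hgb] with z hz
          simp only [norm_mul, Pi.sub_apply]
          calc ‖gstar z‖ * ‖ω z - f z‖ ≤ 1 * ‖ω z - f z‖ :=
                mul_le_mul_of_nonneg_right hz (norm_nonneg _)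
            _ = ‖ω z - f z‖ := one_mul _
  have hsubint : Integrable (ω - fstar) dA := hωi.sub hfi
  have hgsubint : Integrable (fun z => gstar z * (ω z - fstar z)) dA :=
    hint _ (hsubint : Integrable (fun z => ω z - fstar z) dA)
  set I : ℂ := ∫ z, gstar z * (ω z - fstar z) ∂dA with hIdef
  have hIω : I = ∫ z, gstar z * ω z ∂dA := hshift fstar hf
  have hdlow : ENNReal.ofReal ‖∫ z, gstar z * ω z ∂dA‖
      ≤ ⨅ f : {f : ℂ → ℂ // MemAp 1 f}, eLpNorm (ω - f.1) 1 dA :=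
    le_iInf fun f => hbound f.1 f.2
  have hdhigh : (⨅ f : {f : ℂ → ℂ // MemAp 1 f}, eLpNorm (ω - f.1) 1 dA)
      ≤ eLpNorm (ω - fstar) 1 dA := iInf_le (fun f : {f : ℂ → ℂ // MemAp 1 f} => eLpNorm (ω - f.1) 1 dA) ⟨fstar, hf⟩
  constructor
  · rintro ⟨h1, h2⟩
    -- equality of integrals
    have hkey : ∫ z, ‖ω z - fstar z‖ ∂dA = ‖I‖ := by
      have he : ENNReal.ofReal (∫ z, ‖(ω - fstar) z‖ ∂dA)
          = ENNReal.ofReal ‖∫ z, gstar z * ω z ∂dA‖ := by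
        rw [← hsnorm _ hsubint, h1, h2]
      rw [hIω]
      have h0 : (0:ℝ) ≤ ∫ z, ‖(ω - fstar) z‖ ∂dA := integral_nonneg fun z => norm_nonneg _
      have := (ENNReal.ofReal_eq_ofReal_iff h0 (norm_nonneg _)).mp he
      simpa using this
    refine ⟨-I.arg, ?_⟩
    have hIeq : Complex.exp ((-I.arg : ℝ) * Complex.I) * I = (‖I‖ : ℂ) :=
      exp_neg_arg_mul_self I
    set c : ℂ → ℂ := fun z => Complex.exp ((-I.arg : ℝ) * Complex.I) * (gstar z * (ω z - fstar z))
      with hcdef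
    have hci : Integrable c dA := hgsubint.const_mul _
    have hcint : ∫ z, c z ∂dA = (‖I‖ : ℂ) := by
      rw [hcdef]
      rw [integral_const_mul]
      rw [← hIdef, hIeq]
    -- pointwise bound
    have hcb : ∀ᵐ z ∂dA, ‖c z‖ ≤ ‖ω z - fstar z‖ := by
      filter_upwards [hgb] with z hz
      have : ‖c z‖
          = ‖Complex.exp ((-I.arg : ℝ) * Complex.I)‖ * (‖gstar z‖
            * ‖ω z - fstar z‖) := by
        rw [hcdef]; simp [norm_mul]
      rw [this, Complex.norm_exp_ofReal_mul_I, one_mul]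
      calc ‖gstar z‖ * ‖ω z - fstar z‖
          ≤ 1 * ‖ω z - fstar z‖ := by
            apply mul_le_mul_of_nonneg_right _ (norm_nonneg _)
            exact hz
        _ = ‖ω z - fstar z‖ := one_mul _
    -- the deficiency function has zero integral
    have hn : Integrable (fun z => ‖ω z - fstar z‖) dA := hsubint.norm
    have hr : Integrable (fun z => (c z).re) dA := hci.re
    have hdefint : Integrable (fun z => ‖ω z - fstar z‖ - (c z).re) dA := hn.sub hr
    have hdefnn : 0 ≤ᵐ[dA] fun z => ‖ω z - fstar z‖ - (c z).re := by
      filter_upwards [hcb] with z hz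
      have : (c z).re ≤ ‖c z‖ := Complex.re_le_norm _
      simp only [Pi.zero_apply]
      linarith
    have hdefzero : ∫ z, (‖ω z - fstar z‖ - (c z).re) ∂dA = 0 := by
      rw [integral_sub hn hr]
      have hre : ∫ z, (c z).re ∂dA = ‖I‖ := by
        have := integral_re (μ := dA) hci
        simp only [RCLike.re_to_complex] at this ⊢
        rw [this, hcint]
        simp
      rw [hre, hkey, sub_self]
    have haezero : (fun z => ‖ω z - fstar z‖ - (c z).re) =ᵐ[dA] 0 :=
      (integral_eq_zero_iff_of_nonneg_ae hdefnn hdefint).mp hdefzero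
    filter_upwards [haezero, hcb] with z hz hz2
    have hre : (c z).re = ‖ω z - fstar z‖ := by
      have : ‖ω z - fstar z‖ - (c z).re = 0 := hz
      linarith
    -- |c z| = re c z forces c z real nonneg
    have habs : ‖c z‖ = (c z).re := by
      have h1 : (c z).re ≤ ‖c z‖ := Complex.re_le_norm _
      have h2 : ‖c z‖ ≤ (c z).re := by rw [hre]; exact hz2
      linarith
    have him : (c z).im = 0 := by
      have hsq : ‖c z‖ ^ 2 = (c z).re ^ 2 + (c z).im ^ 2 := by
        rw [Complex.sq_norm, Complex.normSq_apply]; ring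
      rw [habs] at hsq
      nlinarith [sq_nonneg ((c z).im)]
    have : c z = ((‖ω z - fstar z‖ : ℝ) : ℂ) := by
      apply Complex.ext
      · simp [hre]
      · simp [him]
    rw [← this, hcdef]
    ring
  · rintro ⟨α, hα⟩
    -- compute e^{iα} I
    have heI : Complex.exp ((α : ℝ) * Complex.I) * I
        = ((∫ z, ‖ω z - fstar z‖ ∂dA : ℝ) : ℂ) := by
      rw [hIdef, ← integral_const_mul]
      rw [show (∫ z, Complex.exp ((α : ℝ) * Complex.I) * (gstar z * (ω z - fstar z)) ∂dA)
          = ∫ z, ((‖ω z - fstar z‖ : ℝ) : ℂ) ∂dA from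
        integral_congr_ae (by filter_upwards [hα] with z hz; rw [← hz]; ring)]
      exact integral_ofReal
    have habsI : ‖I‖ = ∫ z, ‖ω z - fstar z‖ ∂dA := by
      have h0 : (0:ℝ) ≤ ∫ z, ‖ω z - fstar z‖ ∂dA :=
        integral_nonneg fun z => norm_nonneg _
      have := congrArg (‖·‖) heI
      rwa [norm_mul, Complex.norm_exp_ofReal_mul_I, one_mul, Complex.norm_real, Real.norm_eq_abs,
        _root_.abs_of_nonneg h0] at this
    have hnorm : eLpNorm (ω - fstar) 1 dA
        = ENNReal.ofReal ‖∫ z, gstar z * ω z ∂dA‖ := by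
      rw [hsnorm _ hsubint, ← hIω, habsI]
      congr 1
    have h1 : eLpNorm (ω - fstar) 1 dA
        = ⨅ f : {f : ℂ → ℂ // MemAp 1 f}, eLpNorm (ω - f.1) 1 dA :=
      le_antisymm (hnorm ▸ hdlow) hdhigh
    exact ⟨h1, by rw [← hnorm, h1]⟩
end

section
/- Let ω ∈ L^1(D) be continuous on D (the open disk). If f₁ and f₂ are both best approximants to ω in A^1, i.e. ‖ω − f₁‖_1 = ‖ω − f₂‖_1 = inf{‖ω − f‖_1 : f ∈ A^1}, then f₁ = f₂. In other words, a continuous integrable function on the disk has a unique best approximant in the Bergman space A^1. -/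
open MeasureTheory Metric Complex
open scoped ENNReal
open scoped NNReal

lemma ae_dA_eq : ae dA = ae ((volume : Measure ℂ).restrict (ball (0 : ℂ) 1)) := by
  have h : (ENNReal.ofReal (1 / Real.pi)) ≠ 0 := by
    simp [ENNReal.ofReal_eq_zero, not_le, Real.pi_pos, div_pos]
  exact Measure.ae_ennreal_smul_measure_eq h _

/-- Equality case of the triangle inequality in `ℂ`, product form. -/
lemma sameRay_mul_conj {x y : ℂ} (h : SameRay ℝ x y) :
    (x * (starRingEnd ℂ) y).im = 0 ∧ 0 ≤ (x * (starRingEnd ℂ) y).re := by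
  rcases h with h | h | ⟨r, s, hr, hs, hrs⟩
  · simp [h]
  · simp [h]
  · have hy : y = (s⁻¹ * r) • x := by
      have h2 : s⁻¹ • (s • y) = s⁻¹ • (r • x) := by rw [hrs]
      rw [smul_smul, smul_smul, inv_mul_cancel₀ hs.ne', one_smul] at h2
      rw [← h2]
    have hc : (0:ℝ) ≤ s⁻¹ * r := le_of_lt (mul_pos (inv_pos.2 hs) hr)
    have hkey : x * (starRingEnd ℂ) y
        = ((s⁻¹ * r : ℝ) : ℂ) * ((Complex.normSq x : ℝ) : ℂ) := by
      rw [hy, Complex.real_smul, map_mul, Complex.conj_ofReal, mul_left_comm,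
        Complex.mul_conj]
    rw [hkey]
    constructor
    · simp
    · simp only [Complex.mul_re, Complex.ofReal_re, Complex.ofReal_im, mul_zero, zero_mul,
        sub_zero]
      exact mul_nonneg hc (Complex.normSq_nonneg x)

/-- Pointwise representation: if `a * conj b` is real and `b ≠ 0`, then `a` is a real
multiple of `b`. -/
lemma real_ratio_rep (a b : ℂ) (hb : b ≠ 0) (him : (a * (starRingEnd ℂ) b).im = 0) :
    a = (((a * (starRingEnd ℂ) b).re / Complex.normSq b : ℝ) : ℂ) * b := by
  have hnsq : Complex.normSq b ≠ 0 := by simpa [Complex.normSq_eq_zero] using hb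
  have hkey : a * (starRingEnd ℂ) b = (((a * (starRingEnd ℂ) b).re : ℝ) : ℂ) := by
    apply Complex.ext
    · simp
    · simpa using him
  push_cast
  rw [div_mul_eq_mul_div, eq_div_iff (by exact_mod_cast hnsq)]
  calc a * ((Complex.normSq b : ℝ) : ℂ) = a * (b * (starRingEnd ℂ) b) := by
        rw [Complex.mul_conj]
    _ = (a * (starRingEnd ℂ) b) * b := by ring
    _ = _ := by rw [hkey]; simp

lemma lam_dichotomy (a b : ℂ) (l : ℝ) (hb : b ≠ 0) (ha : a = (l:ℂ) * b)
    (hre : 0 ≤ ((a * (starRingEnd ℂ) (a - b)).re)) : l ≤ 0 ∨ 1 ≤ l := by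
  have hkey : a * (starRingEnd ℂ) (a - b) = ((l * (l - 1) * Complex.normSq b : ℝ) : ℂ) := by
    rw [ha, map_sub, map_mul, Complex.conj_ofReal]
    push_cast
    linear_combination ((l:ℂ) * ((l:ℂ) - 1)) * Complex.mul_conj b
  rw [hkey] at hre
  simp only [Complex.ofReal_re] at hre
  have hnsq : 0 < Complex.normSq b := Complex.normSq_pos.2 hb
  have h2 : 0 ≤ l * (l - 1) := by nlinarith
  rcases mul_nonneg_iff.1 h2 with ⟨h, h'⟩ | ⟨h, h'⟩
  · right; linarith
  · left; exact h

lemma ofReal_norm_eq_coe_nnnorm' (x : ℂ) : ENNReal.ofReal ‖x‖ = (‖x‖₊ : ℝ≥0∞) :=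
  ofReal_norm x

/-- A continuous integrable function on the open unit disk has a unique best approximant
in the Bergman space `A^1` (Theorem 3.1). -/
theorem stmt_3 (ω : ℂ → ℂ) (hωc : ContinuousOn ω (ball (0 : ℂ) 1)) (hω : MemLp ω 1 dA)
    (f₁ f₂ : ℂ → ℂ) (h₁ : MemAp 1 f₁) (h₂ : MemAp 1 f₂)
    (hb₁ : eLpNorm (ω - f₁) 1 dA
      = ⨅ f : {f : ℂ → ℂ // MemAp 1 f}, eLpNorm (ω - f.1) 1 dA)
    (hb₂ : eLpNorm (ω - f₂) 1 dA
      = ⨅ f : {f : ℂ → ℂ // MemAp 1 f}, eLpNorm (ω - f.1) 1 dA) :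
    Set.EqOn f₁ f₂ (ball (0 : ℂ) 1) := by
  by_contra hne
  obtain ⟨z₀, hz₀B, hz₀⟩ : ∃ z ∈ ball (0 : ℂ) 1, f₁ z ≠ f₂ z := by
    by_contra h
    push_neg at h
    exact hne h
  -- basic membership facts
  have hf₁ : MemLp f₁ 1 dA := by simpa [ENNReal.ofReal_one] using h₁.2
  have hf₂ : MemLp f₂ 1 dA := by simpa [ENNReal.ofReal_one] using h₂.2
  have hφ₁ : MemLp (ω - f₁) 1 dA := hω.sub hf₁
  have hφ₂ : MemLp (ω - f₂) 1 dA := hω.sub hf₂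
  have hu : MemLp (f₂ - f₁) 1 dA := hf₂.sub hf₁
  set d : ℝ≥0∞ := ⨅ f : {f : ℂ → ℂ // MemAp 1 f}, eLpNorm (ω - f.1) 1 dA with hd
  have hd_ne : d ≠ ∞ := by rw [← hb₁]; exact hφ₁.2.ne
  -- Step 1: the midpoint is also a best approximant, giving a.e. alignment
  have key : ∀ᵐ z ∂dA, SameRay ℝ (ω z - f₁ z) (ω z - f₂ z) := by
    set g : ℂ → ℂ := fun z => (2⁻¹ : ℂ) * (f₁ z + f₂ z) with hg
    have hgmem : MemAp 1 g := by
      constructor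
      · exact (h₁.1.add h₂.1).const_mul _
      · rw [ENNReal.ofReal_one]
        exact (hf₁.add hf₂).const_mul _
    have hd_le : d ≤ eLpNorm (ω - g) 1 dA := by
      rw [hd]
      exact iInf_le _ (⟨g, hgmem⟩ : {f : ℂ → ℂ // MemAp 1 f})
    have hpt : ∀ z, ((ω - g) z) = (2⁻¹ : ℂ) * ((ω z - f₁ z) + (ω z - f₂ z)) := by
      intro z; simp only [Pi.sub_apply, hg]; ring
    have hs_meas : AEStronglyMeasurable (fun z => (ω z - f₁ z) + (ω z - f₂ z)) dA := by
      have := hφ₁.1.add hφ₂.1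
      exact this
    set Is := ∫⁻ z, ‖(ω z - f₁ z) + (ω z - f₂ z)‖₊ ∂dA with hIs
    have hEg : eLpNorm (ω - g) 1 dA = 2⁻¹ * Is := by
      rw [eLpNorm_one_eq_lintegral_enorm, hIs, ← lintegral_const_mul' 2⁻¹ _ (by norm_num)]
      refine lintegral_congr fun z => ?_
      rw [hpt z, enorm_mul]
      push_cast
      congr 1
      simp
      rw [← ofReal_norm]; simp
    have hI₁ : ∫⁻ z, (‖ω z - f₁ z‖₊ : ℝ≥0∞) ∂dA = d := by
      rw [← hb₁, eLpNorm_one_eq_lintegral_enorm]; rfl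
    have hI₂ : ∫⁻ z, (‖ω z - f₂ z‖₊ : ℝ≥0∞) ∂dA = d := by
      rw [← hb₂, eLpNorm_one_eq_lintegral_enorm]; rfl
    have hIs_ge : d + d ≤ Is := by
      have h1 : d ≤ 2⁻¹ * Is := hEg ▸ hd_le
      calc d + d ≤ 2⁻¹ * Is + 2⁻¹ * Is := add_le_add h1 h1
        _ = Is := by
          rw [← two_mul, ← mul_assoc, ENNReal.mul_inv_cancel (by norm_num) (by norm_num),
            one_mul]
    have hmono : ∀ z, (‖(ω z - f₁ z) + (ω z - f₂ z)‖₊ : ℝ≥0∞)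
        ≤ ‖ω z - f₁ z‖₊ + ‖ω z - f₂ z‖₊ := by
      intro z
      exact_mod_cast nnnorm_add_le _ _
    have hm1 : AEMeasurable (fun z => (‖ω z - f₁ z‖₊ : ℝ≥0∞)) dA := hφ₁.1.enorm
    have hadd : ∫⁻ z, ((‖ω z - f₁ z‖₊ : ℝ≥0∞) + ‖ω z - f₂ z‖₊) ∂dA = d + d := by
      rw [lintegral_add_left' hm1, hI₁, hI₂]
    have hIs_le : Is ≤ d + d := by
      rw [← hadd]; exact lintegral_mono hmono
    have hIs_eq : Is = d + d := le_antisymm hIs_le hIs_ge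
    have hIs_ne : Is ≠ ∞ := by
      rw [hIs_eq]; exact ENNReal.add_ne_top.2 ⟨hd_ne, hd_ne⟩
    have hsub : ∫⁻ z, (((‖ω z - f₁ z‖₊ : ℝ≥0∞) + ‖ω z - f₂ z‖₊)
        - ‖(ω z - f₁ z) + (ω z - f₂ z)‖₊) ∂dA = 0 := by
      rw [lintegral_sub' (show AEMeasurable
          (fun z => (‖(ω z - f₁ z) + (ω z - f₂ z)‖₊ : ℝ≥0∞)) dA from hs_meas.enorm) hIs_ne (Filter.Eventually.of_forall hmono),
        hadd, ← hIs, hIs_eq, tsub_self]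
    have hae0 := (lintegral_eq_zero_iff'
        ((hφ₁.1.enorm.add hφ₂.1.enorm).sub hs_meas.enorm)).1 hsub
    filter_upwards [hae0] with z hz
    have hle : ((‖ω z - f₁ z‖₊ : ℝ≥0∞) + ‖ω z - f₂ z‖₊)
        ≤ ‖(ω z - f₁ z) + (ω z - f₂ z)‖₊ := tsub_eq_zero_iff_le.1 hz
    have heq : (‖(ω z - f₁ z) + (ω z - f₂ z)‖₊ : ℝ≥0∞) = ‖ω z - f₁ z‖₊ + ‖ω z - f₂ z‖₊ :=
      le_antisymm (hmono z) hle
    rw [sameRay_iff_norm_add]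
    have h2 : ‖(ω z - f₁ z) + (ω z - f₂ z)‖₊ = ‖ω z - f₁ z‖₊ + ‖ω z - f₂ z‖₊ := by
      exact_mod_cast heq
    have h3 := congrArg (fun t : ℝ≥0 => (t : ℝ)) h2
    simpa [NNReal.coe_add, coe_nnnorm] using h3
  -- Step 2: transfer to the restricted Lebesgue measure
  have keyR : ∀ᵐ z ∂((volume : Measure ℂ).restrict (ball (0 : ℂ) 1)),
      SameRay ℝ (ω z - f₁ z) (ω z - f₂ z) := by
    rw [Filter.Eventually, ← ae_dA_eq]
    exact key
  -- Step 3: everywhere statements by continuity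
  have hBc : ball (0 : ℂ) 1 ⊆ closure (interior (ball (0 : ℂ) 1)) := by
    rw [isOpen_ball.interior_eq]
    exact subset_closure
  have hf₁c : ContinuousOn f₁ (ball (0 : ℂ) 1) := h₁.1.continuousOn
  have hf₂c : ContinuousOn f₂ (ball (0 : ℂ) 1) := h₂.1.continuousOn
  have hPc : ContinuousOn (fun z => (ω z - f₁ z) * (starRingEnd ℂ) (ω z - f₂ z))
      (ball (0 : ℂ) 1) :=
    (hωc.sub hf₁c).mul (Complex.continuous_conj.comp_continuousOn (hωc.sub hf₂c))
  have hIm : ∀ z ∈ ball (0 : ℂ) 1,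
      ((ω z - f₁ z) * (starRingEnd ℂ) (ω z - f₂ z)).im = 0 := by
    have hae : (fun z => ((ω z - f₁ z) * (starRingEnd ℂ) (ω z - f₂ z)).im)
        =ᵐ[(volume : Measure ℂ).restrict (ball (0 : ℂ) 1)] (fun _ => (0:ℝ)) := by
      filter_upwards [keyR] with z hz using (sameRay_mul_conj hz).1
    exact Measure.eqOn_of_ae_eq hae (Complex.continuous_im.comp_continuousOn hPc)
      continuousOn_const hBc
  have hRe : ∀ z ∈ ball (0 : ℂ) 1,
      0 ≤ ((ω z - f₁ z) * (starRingEnd ℂ) (ω z - f₂ z)).re := by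
    have hae : (fun z => ((ω z - f₁ z) * (starRingEnd ℂ) (ω z - f₂ z)).re
          - |((ω z - f₁ z) * (starRingEnd ℂ) (ω z - f₂ z)).re|)
        =ᵐ[(volume : Measure ℂ).restrict (ball (0 : ℂ) 1)] (fun _ => (0:ℝ)) := by
      filter_upwards [keyR] with z hz
      have h2 := (sameRay_mul_conj hz).2
      rw [_root_.abs_of_nonneg h2, sub_self]
    have hFc : ContinuousOn (fun z => ((ω z - f₁ z) * (starRingEnd ℂ) (ω z - f₂ z)).re)
        (ball (0 : ℂ) 1) := Complex.continuous_re.comp_continuousOn hPc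
    have := Measure.eqOn_of_ae_eq hae (hFc.sub hFc.abs) continuousOn_const hBc
    intro z hz
    have h0 := this hz
    simp only at h0
    have h1 : ((ω z - f₁ z) * (starRingEnd ℂ) (ω z - f₂ z)).re
        = |((ω z - f₁ z) * (starRingEnd ℂ) (ω z - f₂ z)).re| := by linarith [sub_eq_zero.1 h0]
    rw [h1]
    exact abs_nonneg _
  -- Step 4: the difference u is analytic with countable zero set
  set u : ℂ → ℂ := fun z => f₂ z - f₁ z with hu_def
  have huc : ContinuousOn u (ball (0 : ℂ) 1) := hf₂c.sub hf₁c
  have hu_an : AnalyticOnNhd ℂ u (ball (0 : ℂ) 1) :=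
    (h₂.1.sub h₁.1).analyticOnNhd isOpen_ball
  have huz₀ : u z₀ ≠ 0 := sub_ne_zero.2 (Ne.symm hz₀)
  set Z : Set ℂ := {z | z ∈ ball (0 : ℂ) 1 ∧ u z = 0} with hZ
  have hZc : Z.Countable := by
    have hdisc : DiscreteTopology Z := by
      rw [discreteTopology_subtype_iff]
      intro z hz
      rcases (hu_an z hz.1).eventually_eq_zero_or_eventually_ne_zero with hcase | hcase
      · exfalso
        have : Set.EqOn u 0 (ball (0 : ℂ) 1) :=
          hu_an.eqOn_zero_of_preconnected_of_frequently_eq_zero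
            (convex_ball (0:ℂ) 1).isPreconnected hz.1
            (hcase.filter_mono nhdsWithin_le_nhds).frequently
        exact huz₀ (this hz₀B)
      · rw [Filter.inf_principal_eq_bot]
        filter_upwards [hcase] with w hw
        exact fun hwZ => hw hwZ.2
    have hcnt : Countable Z := TopologicalSpace.separableSpace_iff_countable.1 inferInstance
    exact Set.countable_coe_iff.1 hcnt
  set U : Set ℂ := ball (0 : ℂ) 1 \ Z with hU
  have hUopen : ∀ z ∈ U, u z ≠ 0 := fun z hz h0 => hz.2 ⟨hz.1, h0⟩
  have hz₀U : z₀ ∈ U := ⟨hz₀B, fun h => huz₀ h.2⟩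
  -- Step 5: U is connected
  have hU_conn : IsPreconnected U := by
    have hrank : 1 < Module.rank ℝ ℂ := by
      rw [Complex.rank_real_complex]; norm_num
    set e : ℂ ≃ₜ ball (0:ℂ) 1 := Homeomorph.unitBall with he
    set S : Set ℂ := e ⁻¹' (Subtype.val ⁻¹' Z) with hS
    have hSc : S.Countable :=
      (hZc.preimage Subtype.val_injective).preimage e.injective
    have hpc : IsPathConnected Sᶜ := hSc.isPathConnected_compl_of_one_lt_rank hrank
    have himage : (fun x : ℂ => (e x : ℂ)) '' Sᶜ = ball (0:ℂ) 1 \ Z := by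
      ext x
      constructor
      · rintro ⟨w, hw, rfl⟩
        refine ⟨(e w).2, fun hx => hw ?_⟩
        simp only [hS, Set.mem_preimage]
        exact hx
      · rintro ⟨hxB, hxZ⟩
        refine ⟨e.symm ⟨x, hxB⟩, fun hmem => ?_, by simp⟩
        simp only [hS, Set.mem_preimage, Homeomorph.apply_symm_apply] at hmem
        exact hxZ hmem
    have h2 := hpc.image
      (show Continuous (fun x : ℂ => (e x : ℂ)) from continuous_subtype_val.comp e.continuous)
    rw [himage] at h2
    exact h2.isConnected.isPreconnected
  -- Step 6: the real ratio function and its dichotomy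
  set lam : ℂ → ℝ :=
    fun z => ((ω z - f₁ z) * (starRingEnd ℂ) (u z)).re / Complex.normSq (u z) with hlam
  have hlam_cont : ContinuousOn lam U := by
    apply ContinuousOn.div
    · exact (Complex.continuous_re.comp_continuousOn
        (((hωc.sub hf₁c).mul (Complex.continuous_conj.comp_continuousOn huc)))).mono
        Set.diff_subset
    · exact (Complex.continuous_normSq.comp_continuousOn huc).mono Set.diff_subset
    · intro z hz
      simpa [Complex.normSq_eq_zero] using hUopen z hz
  have hsplit : ∀ z, ω z - f₂ z = (ω z - f₁ z) - u z := by
    intro z; simp only [hu_def]; ring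
  have hrep : ∀ z ∈ U, ω z - f₁ z = ((lam z : ℝ) : ℂ) * u z := by
    intro z hz
    have him0 := hIm z hz.1
    rw [hsplit z, map_sub, mul_sub] at him0
    have him : ((ω z - f₁ z) * (starRingEnd ℂ) (u z)).im = 0 := by
      have : ((ω z - f₁ z) * (starRingEnd ℂ) (ω z - f₁ z)).im = 0 := by
        rw [Complex.mul_conj]; simp
      simp only [Complex.sub_im] at him0
      rw [this] at him0
      linarith
    exact real_ratio_rep _ _ (hUopen z hz) him
  have hdich : ∀ z ∈ U, lam z ≤ 0 ∨ 1 ≤ lam z := by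
    intro z hz
    refine lam_dichotomy (ω z - f₁ z) (u z) (lam z) (hUopen z hz) (hrep z hz) ?_
    have := hRe z hz.1
    rwa [hsplit z] at this
  -- Step 7: globalize the dichotomy by connectedness
  have hglob : (∀ z ∈ U, lam z ≤ 0) ∨ (∀ z ∈ U, 1 ≤ lam z) := by
    by_contra h
    push_neg at h
    obtain ⟨⟨a, ha, ha'⟩, ⟨b, hb, hb'⟩⟩ := h
    have ha1 : 1 ≤ lam a := (hdich a ha).resolve_left (by linarith)
    have hb0 : lam b ≤ 0 := (hdich b hb).resolve_right (by linarith)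
    have hmem : (2⁻¹ : ℝ) ∈ Set.Icc (lam b) (lam a) := ⟨by linarith, by linarith⟩
    obtain ⟨x, hxU, hx⟩ := hU_conn.intermediate_value hb ha hlam_cont hmem
    rcases hdich x hxU with h' | h' <;> rw [hx] at h' <;> norm_num at h'
  -- Step 8: integral contradiction, ∫|u| = 0
  have hm1 : AEMeasurable (fun z => (‖ω z - f₁ z‖₊ : ℝ≥0∞)) dA := hφ₁.1.enorm
  have hm2 : AEMeasurable (fun z => (‖ω z - f₂ z‖₊ : ℝ≥0∞)) dA := hφ₂.1.enorm
  have hI₁ : ∫⁻ z, (‖ω z - f₁ z‖₊ : ℝ≥0∞) ∂dA = d := by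
    rw [← hb₁, eLpNorm_one_eq_lintegral_enorm]; rfl
  have hI₂ : ∫⁻ z, (‖ω z - f₂ z‖₊ : ℝ≥0∞) ∂dA = d := by
    rw [← hb₂, eLpNorm_one_eq_lintegral_enorm]; rfl
  have haeU : ∀ᵐ z ∂dA, z ∈ U := by
    rw [Filter.Eventually, ae_dA_eq]
    have hZ0 : ((volume : Measure ℂ).restrict (ball (0 : ℂ) 1)) Z = 0 := by
      exact le_antisymm (le_trans (Measure.restrict_apply_le _ _)
        (le_of_eq (hZc.measure_zero _))) zero_le
    have h1 : ∀ᵐ z ∂((volume : Measure ℂ).restrict (ball (0 : ℂ) 1)), z ∉ Z :=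
      measure_eq_zero_iff_ae_notMem.1 hZ0
    have h2 : ∀ᵐ z ∂((volume : Measure ℂ).restrict (ball (0 : ℂ) 1)), z ∈ ball (0 : ℂ) 1 :=
      ae_restrict_mem measurableSet_ball
    filter_upwards [h1, h2] with z h1z h2z
    exact ⟨h2z, h1z⟩
  have hnorm_rep : ∀ z ∈ U, ‖ω z - f₁ z‖ = |lam z| * ‖u z‖ ∧
      ‖ω z - f₂ z‖ = |lam z - 1| * ‖u z‖ := by
    intro z hz
    constructor
    · rw [hrep z hz, norm_mul, Complex.norm_real, Real.norm_eq_abs]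
    · have : ω z - f₂ z = ((lam z - 1 : ℝ) : ℂ) * u z := by
        rw [hsplit z, hrep z hz]
        push_cast
        ring
      rw [this, norm_mul, Complex.norm_real, Real.norm_eq_abs]
  have hIu : ∫⁻ z, (‖u z‖₊ : ℝ≥0∞) ∂dA = 0 := by
    have humeas : AEMeasurable (fun z => (‖u z‖₊ : ℝ≥0∞)) dA := hu.1.enorm
    rcases hglob with hcase | hcase
    · -- lam ≤ 0 : ‖φ₂‖ = ‖φ₁‖ + ‖u‖ a.e.
      have hptw : ∀ᵐ z ∂dA, (‖ω z - f₂ z‖₊ : ℝ≥0∞) = ‖ω z - f₁ z‖₊ + ‖u z‖₊ := by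
        filter_upwards [haeU] with z hz
        obtain ⟨e₁, e₂⟩ := hnorm_rep z hz
        have hl := hcase z hz
        have hreal : ‖ω z - f₂ z‖ = ‖ω z - f₁ z‖ + ‖u z‖ := by
          rw [e₁, e₂, _root_.abs_of_nonpos hl, _root_.abs_of_nonpos (by linarith : lam z - 1 ≤ 0)]
          ring
        rw [← ofReal_norm_eq_coe_nnnorm', ← ofReal_norm_eq_coe_nnnorm',
          ← ofReal_norm_eq_coe_nnnorm', hreal, ENNReal.ofReal_add (norm_nonneg _) (norm_nonneg _)]
      have heq2 : ∫⁻ z, (‖ω z - f₂ z‖₊ : ℝ≥0∞) ∂dA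
          = ∫⁻ z, (‖ω z - f₁ z‖₊ : ℝ≥0∞) ∂dA + ∫⁻ z, (‖u z‖₊ : ℝ≥0∞) ∂dA := by
        rw [lintegral_congr_ae hptw, lintegral_add_left' hm1]
      rw [hI₁, hI₂] at heq2
      have h0 : d + 0 = d + ∫⁻ z, (‖u z‖₊ : ℝ≥0∞) ∂dA := by rw [add_zero]; exact heq2
      exact ((ENNReal.add_right_inj hd_ne).1 h0).symm
    · -- 1 ≤ lam : ‖φ₁‖ = ‖φ₂‖ + ‖u‖ a.e.
      have hptw : ∀ᵐ z ∂dA, (‖ω z - f₁ z‖₊ : ℝ≥0∞) = ‖ω z - f₂ z‖₊ + ‖u z‖₊ := by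
        filter_upwards [haeU] with z hz
        obtain ⟨e₁, e₂⟩ := hnorm_rep z hz
        have hl := hcase z hz
        have hreal : ‖ω z - f₁ z‖ = ‖ω z - f₂ z‖ + ‖u z‖ := by
          rw [e₁, e₂, _root_.abs_of_nonneg (by linarith : (0:ℝ) ≤ lam z),
            _root_.abs_of_nonneg (by linarith : (0:ℝ) ≤ lam z - 1)]
          ring
        rw [← ofReal_norm_eq_coe_nnnorm', ← ofReal_norm_eq_coe_nnnorm',
          ← ofReal_norm_eq_coe_nnnorm', hreal, ENNReal.ofReal_add (norm_nonneg _) (norm_nonneg _)]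
      have heq2 : ∫⁻ z, (‖ω z - f₁ z‖₊ : ℝ≥0∞) ∂dA
          = ∫⁻ z, (‖ω z - f₂ z‖₊ : ℝ≥0∞) ∂dA + ∫⁻ z, (‖u z‖₊ : ℝ≥0∞) ∂dA := by
        rw [lintegral_congr_ae hptw, lintegral_add_left' hm2]
      rw [hI₁, hI₂] at heq2
      have h0 : d + 0 = d + ∫⁻ z, (‖u z‖₊ : ℝ≥0∞) ∂dA := by rw [add_zero]; exact heq2
      exact ((ENNReal.add_right_inj hd_ne).1 h0).symm
  -- Step 9: conclude u ≡ 0 on the ball, contradiction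
  have hu0 : ∀ᵐ z ∂dA, u z = 0 := by
    have := (lintegral_eq_zero_iff' hu.1.enorm).1 hIu
    filter_upwards [this] with z hz
    have : (‖u z‖₊ : ℝ≥0∞) = 0 := hz
    simpa using this
  have hu0R : ∀ᵐ z ∂((volume : Measure ℂ).restrict (ball (0 : ℂ) 1)),
      u z = (fun _ => (0:ℂ)) z := by
    rw [Filter.Eventually, ← ae_dA_eq]
    exact hu0
  have : Set.EqOn u (fun _ => (0:ℂ)) (ball (0 : ℂ) 1) :=
    Measure.eqOn_of_ae_eq hu0R huc continuousOn_const hBc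
  exact huz₀ (this hz₀B)
end

section
/- For f ∈ L^1(D), let f^♯(r) = (1/2π)∫_0^{2π} f(re^{iθ}) dθ for 0 < r < 1 denote the mean of f over the circle of radius r. Then for every harmonic function u ∈ L^1_h(D), ∫_D |f − u| dA ≥ 2 ∫_0^1 |f^♯(r) − u(0)| r dr. -/
open MeasureTheory Metric Complex intervalIntegral
open scoped ENNReal
open scoped Real

/-- A complex-valued function on `ℂ` is harmonic on `U` if it is `C²` there and its
Laplacian (computed with respect to the real directions `1` and `I`) vanishes on `U`. -/
def HarmonicOnC (f : ℂ → ℂ) (U : Set ℂ) : Prop :=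
  ContDiffOn ℝ 2 f U ∧ ∀ z ∈ U,
    fderiv ℝ (fun w => fderiv ℝ f w 1) z 1
      + fderiv ℝ (fun w => fderiv ℝ f w Complex.I) z Complex.I = 0

/-- The circular mean `f♯(r)` of `f` over the circle of radius `r`. -/
noncomputable def circMean (f : ℂ → ℂ) (r : ℝ) : ℂ :=
  ((1 / (2 * Real.pi) : ℝ) : ℂ) * ∫ θ in (0:ℝ)..(2 * Real.pi), f (r * Complex.exp (θ * Complex.I))

lemma holo_of_harmonic {u : ℂ → ℂ} (hu : HarmonicOnC u (ball 0 1)) :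
    DifferentiableOn ℂ (fun z => fderiv ℝ u z 1 - I * fderiv ℝ u z I) (ball 0 1) := by
  intro z hz
  have hball : ball (0:ℂ) 1 ∈ nhds z := isOpen_ball.mem_nhds hz
  have hcd : ContDiffAt ℝ 2 u z := hu.1.contDiffAt hball
  have h1 : ContDiffAt ℝ 1 (fderiv ℝ u) z := hcd.fderiv_right le_rfl
  set A := fderiv ℝ (fderiv ℝ u) z with hA_def
  have hA : HasFDerivAt (fderiv ℝ u) A z :=
    (h1.differentiableAt one_ne_zero).hasFDerivAt
  have hA1 : HasFDerivAt (fun w => fderiv ℝ u w 1)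
      ((ContinuousLinearMap.apply ℝ ℂ (1:ℂ)).comp A) z :=
    (ContinuousLinearMap.apply ℝ ℂ (1:ℂ)).hasFDerivAt.comp z hA
  have hA2 : HasFDerivAt (fun w => fderiv ℝ u w I)
      ((ContinuousLinearMap.apply ℝ ℂ (I:ℂ)).comp A) z :=
    (ContinuousLinearMap.apply ℝ ℂ (I:ℂ)).hasFDerivAt.comp z hA
  have hL : HasFDerivAt (fun w => fderiv ℝ u w 1 - I * fderiv ℝ u w I)
      ((ContinuousLinearMap.apply ℝ ℂ (1:ℂ)).comp A
        - I • (ContinuousLinearMap.apply ℝ ℂ (I:ℂ)).comp A) z :=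
    hA1.sub (hA2.const_mul I)
  set L := (ContinuousLinearMap.apply ℝ ℂ (1:ℂ)).comp A
        - I • (ContinuousLinearMap.apply ℝ ℂ (I:ℂ)).comp A with hL_def
  -- symmetry
  have hsym : A 1 I = A I 1 := by
    have hev : ∀ᶠ y in nhds z, HasFDerivAt u (fderiv ℝ u y) y := by
      filter_upwards [hball] with y hy
      exact ((hu.1.contDiffAt (isOpen_ball.mem_nhds hy)).differentiableAt
        two_ne_zero).hasFDerivAt
    exact second_derivative_symmetric_of_eventually hev hA 1 I
  -- Laplace
  have hlap : A 1 1 + A I I = 0 := by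
    have h2 := hu.2 z hz
    rwa [hA1.fderiv, hA2.fderiv] at h2
  -- CR
  have hCR : L I = I * L 1 := by
    simp only [hL_def, ContinuousLinearMap.sub_apply, ContinuousLinearMap.comp_apply,
      ContinuousLinearMap.smul_apply, ContinuousLinearMap.apply_apply, smul_eq_mul]
    have hII : A I I = - A 1 1 := by linear_combination hlap
    rw [hsym, hII]
    linear_combination (A I 1) * Complex.I_sq
  -- build complex-linear derivative
  have hM : HasFDerivAt (𝕜 := ℂ) (fun w => fderiv ℝ u w 1 - I * fderiv ℝ u w I)
      ((L 1) • (ContinuousLinearMap.id ℂ ℂ)) z := by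
    apply hasFDerivAt_of_restrictScalars ℝ hL
    ext w
    simp only [ContinuousLinearMap.coe_restrictScalars', ContinuousLinearMap.smul_apply,
      ContinuousLinearMap.id_apply, smul_eq_mul]
    conv_rhs => rw [show w = (w.re:ℝ) • (1:ℂ) + (w.im:ℝ) • I by
      simp [Complex.real_smul, Complex.re_add_im]]
    rw [map_add, L.map_smul, L.map_smul, hCR]
    simp only [Complex.real_smul, smul_eq_mul]
    conv_lhs => rw [← Complex.re_add_im w]
    ring
  exact hM.differentiableAt.differentiableWithinAt
lemma fderiv_conj_comp (φ : ℂ → ℂ) (z : ℂ) (v : ℂ) :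
    fderiv ℝ (fun w => (starRingEnd ℂ) (φ w)) z v = (starRingEnd ℂ) (fderiv ℝ φ z v) := by
  have h : (fun w => (starRingEnd ℂ) (φ w)) = (Complex.conjCLE : ℂ → ℂ) ∘ φ := rfl
  rw [h, Complex.conjCLE.comp_fderiv]
  simp

lemma harmonic_conj {u : ℂ → ℂ} (hu : HarmonicOnC u (ball 0 1)) :
    HarmonicOnC (fun z => (starRingEnd ℂ) (u z)) (ball 0 1) := by
  constructor
  · have h : (fun z => (starRingEnd ℂ) (u z)) = (Complex.conjCLE : ℂ → ℂ) ∘ u := rfl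
    rw [h]
    exact (Complex.conjCLE : ℂ →L[ℝ] ℂ).contDiff.comp_contDiffOn hu.1
  · intro z hz
    have hball : ball (0:ℂ) 1 ∈ nhds z := isOpen_ball.mem_nhds hz
    -- the inner fderivs agree with conj of fderivs of u on the ball
    have key : ∀ v : ℂ, fderiv ℝ (fun w => fderiv ℝ (fun x => (starRingEnd ℂ) (u x)) w v) z v
        = (starRingEnd ℂ) (fderiv ℝ (fun w => fderiv ℝ u w v) z v) := by
      intro v
      have hev : (fun w => fderiv ℝ (fun x => (starRingEnd ℂ) (u x)) w v)
          =ᶠ[nhds z] (fun w => (starRingEnd ℂ) (fderiv ℝ u w v)) := by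
        filter_upwards [hball] with y _
        exact fderiv_conj_comp u y v
      rw [hev.fderiv_eq, fderiv_conj_comp]
    rw [key 1, key I, ← map_add, hu.2 z hz, map_zero]
lemma key_theta_integral {G : ℂ → ℂ} (hGc : ContinuousOn G (ball 0 1))
    (hGd : DifferentiableOn ℂ G (ball 0 1)) {r : ℝ} (hr : 0 < r) (hr1 : r < 1) :
    ∫ θ in (0:ℝ)..(2*π), Complex.exp (θ*Complex.I) * G (r * Complex.exp (θ*Complex.I)) = 0 := by
  have hsub : closedBall (0:ℂ) r ⊆ ball 0 1 := closedBall_subset_ball hr1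
  have h0 : (∮ z in C((0:ℂ), r), G z) = 0 := by
    apply circleIntegral_eq_zero_of_differentiable_on_off_countable hr.le
      Set.countable_empty (hGc.mono hsub)
    intro z hz
    exact (hGd z (ball_subset_ball hr1.le hz.1)).differentiableAt
      (isOpen_ball.mem_nhds (ball_subset_ball hr1.le hz.1))
  rw [circleIntegral] at h0
  simp only [deriv_circleMap, circleMap, zero_add, smul_eq_mul] at h0
  have h1 : ∫ θ in (0:ℝ)..(2*π),
      (r * Complex.exp (θ*Complex.I) * Complex.I) * G (r * Complex.exp (θ*Complex.I)) = 0 := by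
    exact h0
  have h2 : ∫ θ in (0:ℝ)..(2*π),
      ((r : ℂ) * Complex.I) * (Complex.exp (θ*Complex.I) * G (r * Complex.exp (θ*Complex.I))) = 0 := by
    rw [← h1]; congr 1; ext θ; ring
  rw [intervalIntegral.integral_const_mul] at h2
  have hne : ((r:ℂ) * Complex.I) ≠ 0 := by
    simp [Complex.I_ne_zero, hr.ne']
  exact (mul_eq_zero.1 h2).resolve_left hne
-- continuity of the circle map
lemma cont_circle (s : ℝ) : Continuous (fun θ : ℝ => (s:ℂ) * Complex.exp (θ*Complex.I)) :=
  continuous_const.mul (Complex.continuous_exp.comp (Complex.continuous_ofReal.mul continuous_const))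

lemma mem_ball_circle {s : ℝ} (hs : |s| < 1) (θ : ℝ) :
    (s:ℂ) * Complex.exp (θ*Complex.I) ∈ ball (0:ℂ) 1 := by
  simp only [mem_ball, dist_zero_right, norm_mul, Complex.norm_real, Real.norm_eq_abs]
  rw [Complex.norm_exp_ofReal_mul_I, mul_one]
  exact hs

lemma integral_conj' {f : ℝ → ℂ} {a b : ℝ} :
    ∫ t in a..b, (starRingEnd ℂ) (f t) = (starRingEnd ℂ) (∫ t in a..b, f t) := by
  simp [intervalIntegral, ← integral_conj]

lemma circMean_harmonic {u : ℂ → ℂ} (hu : HarmonicOnC u (ball 0 1)) {r : ℝ}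
    (hr : r ∈ Set.Ioo (0:ℝ) 1) : circMean u r = u 0 := by
  have hcont : ContinuousOn u (ball 0 1) := hu.1.continuousOn
  have hfd : ContinuousOn (fderiv ℝ u) (ball 0 1) :=
    hu.1.continuousOn_fderiv_of_isOpen isOpen_ball one_le_two
  set g₁ : ℂ → ℂ := fun z => fderiv ℝ u z 1 with hg₁
  set g₂ : ℂ → ℂ := fun z => fderiv ℝ u z I with hg₂
  have hg₁c : ContinuousOn g₁ (ball 0 1) := hfd.clm_apply continuousOn_const
  have hg₂c : ContinuousOn g₂ (ball 0 1) := hfd.clm_apply continuousOn_const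
  set F : ℝ → ℂ := fun s => ∫ θ in (0:ℝ)..(2*π), u ((s:ℂ) * Complex.exp (θ*Complex.I)) with hF
  -- u is continuous on circles of radius < 1
  have hucont : ∀ s : ℝ, |s| < 1 → Continuous (fun θ : ℝ => u ((s:ℂ) * Complex.exp (θ*Complex.I))) :=
    fun s hs => hcont.comp_continuous (cont_circle s) (mem_ball_circle hs)
  -- Step 2 : derivative of F vanishes on (0,1)
  have hF' : ∀ s₀ ∈ Set.Ioo (0:ℝ) 1, HasDerivAt F 0 s₀ := by
    intro s₀ hs₀
    set R : ℝ := (1 + s₀)/2 with hR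
    set ε : ℝ := (1 - s₀)/2 with hε
    have hε_pos : 0 < ε := by simp only [hε]; linarith [hs₀.2]
    have hR1 : R < 1 := by simp only [hR]; linarith [hs₀.2]
    have hεd : ε = (1 - s₀)/2 := rfl
    have hRd : R = (1 + s₀)/2 := rfl
    have habs : ∀ x ∈ ball s₀ ε, |x| < R := by
      intro x hx
      rw [mem_ball, Real.dist_eq, abs_lt] at hx
      rw [abs_lt]
      constructor
      · rw [hRd]; rw [hεd] at hx; linarith [hs₀.1]
      · rw [hRd]; rw [hεd] at hx; linarith
    have hball_mem : ∀ x ∈ ball s₀ ε, ∀ θ : ℝ,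
        (x:ℂ) * Complex.exp (θ*Complex.I) ∈ ball (0:ℂ) 1 :=
      fun x hx θ => mem_ball_circle ((habs x hx).trans hR1) θ
    -- bound on the derivative
    obtain ⟨C, hC⟩ := (isCompact_closedBall (0:ℂ) R).exists_bound_of_continuousOn
      (hfd.mono (closedBall_subset_ball hR1))
    have key := intervalIntegral.hasDerivAt_integral_of_dominated_loc_of_deriv_le
      (F := fun (x : ℝ) (θ : ℝ) => u ((x:ℂ) * Complex.exp (θ*Complex.I)))
      (F' := fun (x : ℝ) (θ : ℝ) =>
        fderiv ℝ u ((x:ℂ) * Complex.exp (θ*Complex.I)) (Complex.exp (θ*Complex.I)))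
      (bound := fun _ => C) (a := (0:ℝ)) (b := 2*π) (μ := volume) (x₀ := s₀) (ball_mem_nhds s₀ hε_pos)
      ?_ ?_ ?_ ?_ ?_ ?_
    · -- conclude that the derivative is the integral, then show the integral is zero
      have hzero : (∫ θ in (0:ℝ)..(2*π),
          fderiv ℝ u ((s₀:ℂ) * Complex.exp (θ*Complex.I)) (Complex.exp (θ*Complex.I))) = 0 := by
        have hgd : DifferentiableOn ℂ (fun z => g₁ z - I * g₂ z) (ball 0 1) :=
          holo_of_harmonic hu
        have hgtd : DifferentiableOn ℂ
            (fun z => (starRingEnd ℂ) (g₁ z) - I * (starRingEnd ℂ) (g₂ z)) (ball 0 1) := by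
          have h := holo_of_harmonic (harmonic_conj hu)
          have he : (fun z => fderiv ℝ (fun x => (starRingEnd ℂ) (u x)) z 1
              - I * fderiv ℝ (fun x => (starRingEnd ℂ) (u x)) z I)
              = (fun z => (starRingEnd ℂ) (g₁ z) - I * (starRingEnd ℂ) (g₂ z)) := by
            funext z
            rw [fderiv_conj_comp, fderiv_conj_comp]
          rwa [he] at h
        have hconjc : Continuous (starRingEnd ℂ) := Complex.continuous_conj
        have hgc : ContinuousOn (fun z => g₁ z - I * g₂ z) (ball 0 1) :=
          hg₁c.sub (continuousOn_const.mul hg₂c)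
        have hgtc : ContinuousOn
            (fun z => (starRingEnd ℂ) (g₁ z) - I * (starRingEnd ℂ) (g₂ z)) (ball 0 1) :=
          (hconjc.comp_continuousOn hg₁c).sub
            (continuousOn_const.mul (hconjc.comp_continuousOn hg₂c))
        have h1 : ∫ θ in (0:ℝ)..(2*π), Complex.exp (θ*Complex.I)
            * (g₁ ((s₀:ℂ)*Complex.exp (θ*Complex.I)) - I * g₂ ((s₀:ℂ)*Complex.exp (θ*Complex.I))) = 0 :=
          key_theta_integral hgc hgd hs₀.1 hs₀.2
        have h2 : ∫ θ in (0:ℝ)..(2*π), Complex.exp (θ*Complex.I)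
            * ((starRingEnd ℂ) (g₁ ((s₀:ℂ)*Complex.exp (θ*Complex.I)))
              - I * (starRingEnd ℂ) (g₂ ((s₀:ℂ)*Complex.exp (θ*Complex.I)))) = 0 :=
          key_theta_integral hgtc hgtd hs₀.1 hs₀.2
        have hs₀1 : |s₀| < 1 := by rw [abs_of_pos hs₀.1]; exact hs₀.2
        have hmem : ∀ θ : ℝ, (s₀:ℂ) * Complex.exp (θ*Complex.I) ∈ ball (0:ℂ) 1 :=
          mem_ball_circle hs₀1
        have hexpc : Continuous (fun θ : ℝ => Complex.exp (θ*Complex.I)) :=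
          Complex.continuous_exp.comp (Complex.continuous_ofReal.mul continuous_const)
        have hg1circ : Continuous (fun θ : ℝ => g₁ ((s₀:ℂ)*Complex.exp (θ*Complex.I))) :=
          hg₁c.comp_continuous (cont_circle s₀) hmem
        have hg2circ : Continuous (fun θ : ℝ => g₂ ((s₀:ℂ)*Complex.exp (θ*Complex.I))) :=
          hg₂c.comp_continuous (cont_circle s₀) hmem
        have hi1 : IntervalIntegrable (fun θ : ℝ => (1/2:ℂ) * (Complex.exp (θ*Complex.I)
            * (g₁ ((s₀:ℂ)*Complex.exp (θ*Complex.I)) - I * g₂ ((s₀:ℂ)*Complex.exp (θ*Complex.I)))))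
            volume 0 (2*π) :=
          (continuous_const.mul (hexpc.mul (hg1circ.sub
            (continuous_const.mul hg2circ)))).intervalIntegrable _ _
        have hi2 : IntervalIntegrable (fun θ : ℝ => (1/2:ℂ) * ((starRingEnd ℂ)
            (Complex.exp (θ*Complex.I)
            * ((starRingEnd ℂ) (g₁ ((s₀:ℂ)*Complex.exp (θ*Complex.I)))
              - I * (starRingEnd ℂ) (g₂ ((s₀:ℂ)*Complex.exp (θ*Complex.I)))))))
            volume 0 (2*π) :=
          (continuous_const.mul (hconjc.comp (hexpc.mul
            ((hconjc.comp hg1circ).sub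
              (continuous_const.mul (hconjc.comp hg2circ)))))).intervalIntegrable _ _
        have hpt : ∀ θ ∈ Set.uIcc (0:ℝ) (2*π),
            fderiv ℝ u ((s₀:ℂ)*Complex.exp (θ*Complex.I)) (Complex.exp (θ*Complex.I))
            = (1/2:ℂ) * (Complex.exp (θ*Complex.I)
                * (g₁ ((s₀:ℂ)*Complex.exp (θ*Complex.I)) - I * g₂ ((s₀:ℂ)*Complex.exp (θ*Complex.I))))
              + (1/2:ℂ) * ((starRingEnd ℂ) (Complex.exp (θ*Complex.I)
                * ((starRingEnd ℂ) (g₁ ((s₀:ℂ)*Complex.exp (θ*Complex.I)))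
                  - I * (starRingEnd ℂ) (g₂ ((s₀:ℂ)*Complex.exp (θ*Complex.I))))) ) := by
          intro θ _
          set z := (s₀:ℂ) * Complex.exp ((θ:ℂ)*Complex.I) with hz
          have he : Complex.exp ((θ:ℂ)*Complex.I)
              = (Real.cos θ : ℝ) • (1:ℂ) + (Real.sin θ : ℝ) • I := by
            rw [Complex.exp_mul_I]
            push_cast
            simp [Complex.real_smul]
          rw [he, map_add, (fderiv ℝ u z).map_smul, (fderiv ℝ u z).map_smul]
          simp only [hg₁, hg₂, Complex.real_smul, smul_eq_mul, map_sub, map_add, map_mul,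
            Complex.conj_conj, Complex.conj_I, Complex.conj_ofReal, map_one, mul_one]
          linear_combination ((Real.sin θ : ℂ) * (fderiv ℝ u z) I) * Complex.I_sq
        rw [intervalIntegral.integral_congr hpt, intervalIntegral.integral_add hi1 hi2,
          intervalIntegral.integral_const_mul, intervalIntegral.integral_const_mul,
          integral_conj', h1, h2]
        simp
      have := key.2
      rwa [hzero] at this
    · filter_upwards [ball_mem_nhds s₀ hε_pos] with x hx
      exact ((hucont x ((habs x hx).trans hR1))).aestronglyMeasurable
    · have : |s₀| < 1 := by rw [abs_of_pos hs₀.1]; exact hs₀.2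
      exact ((hucont s₀ this)).intervalIntegrable _ _
    · have hmem : ∀ θ : ℝ, (s₀:ℂ) * Complex.exp (θ*Complex.I) ∈ ball (0:ℂ) 1 :=
        hball_mem s₀ (mem_ball_self hε_pos)
      apply Continuous.aestronglyMeasurable
      exact (hfd.comp_continuous (cont_circle s₀) hmem).clm_apply
        (Complex.continuous_exp.comp (Complex.continuous_ofReal.mul continuous_const))
    · refine Filter.Eventually.of_forall (fun θ _ x hx => ?_)
      calc ‖fderiv ℝ u ((x:ℂ) * Complex.exp (θ*Complex.I)) (Complex.exp (θ*Complex.I))‖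
          ≤ ‖fderiv ℝ u ((x:ℂ) * Complex.exp (θ*Complex.I))‖ * ‖Complex.exp (θ*Complex.I)‖ :=
            ContinuousLinearMap.le_opNorm _ _
        _ ≤ C := by
            rw [Complex.norm_exp_ofReal_mul_I, mul_one]
            apply hC
            rw [mem_closedBall, dist_zero_right, norm_mul, Complex.norm_real, Real.norm_eq_abs,
              Complex.norm_exp_ofReal_mul_I, mul_one]
            exact (habs x hx).le
    · exact intervalIntegrable_const
    · refine Filter.Eventually.of_forall (fun θ _ x hx => ?_)
      have hz : (x:ℂ) * Complex.exp (θ*Complex.I) ∈ ball (0:ℂ) 1 := hball_mem x hx θ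
      have hdz : HasFDerivAt u (fderiv ℝ u ((x:ℂ) * Complex.exp (θ*Complex.I)))
          ((x:ℂ) * Complex.exp (θ*Complex.I)) :=
        (((hu.1.contDiffAt (isOpen_ball.mem_nhds hz)).differentiableAt
          two_ne_zero)).hasFDerivAt
      have hin : HasDerivAt (fun y : ℝ => (y:ℂ) * Complex.exp (θ*Complex.I))
          (Complex.exp (θ*Complex.I)) x := by
        have h1 : HasDerivAt (fun y : ℂ => y * Complex.exp (θ*Complex.I))
            (Complex.exp (θ*Complex.I)) (x:ℂ) := by
          simpa using (hasDerivAt_id (x:ℂ)).mul_const (Complex.exp (θ*Complex.I))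
        exact h1.comp_ofReal
      exact hdz.comp_hasDerivAt x hin
  -- Step 3: F is constant on Ioo 0 1
  have hconst : ∀ s ∈ Set.Ioo (0:ℝ) 1, F s = F r := by
    intro s hs
    have h := Convex.norm_image_sub_le_of_norm_hasDerivWithin_le
      (f := F) (f' := fun _ => (0:ℂ)) (C := 0)
      (fun x hx => (hF' x hx).hasDerivWithinAt) (fun x _ => by simp)
      (convex_Ioo (0:ℝ) 1) hr hs
    have h0 : ‖F s - F r‖ ≤ 0 := by simpa using h
    have := le_antisymm h0 (norm_nonneg _)
    rwa [norm_eq_zero, sub_eq_zero] at this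
  -- Step 4: limit at 0
  have hlim : Filter.Tendsto F (nhdsWithin 0 (Set.Ioi (0:ℝ))) (nhds ((2*π : ℝ) • u 0)) := by
    rw [Metric.tendsto_nhdsWithin_nhds]
    intro δ hδ
    have hc0 : ContinuousAt u 0 := hcont.continuousAt (isOpen_ball.mem_nhds (by simp))
    rw [Metric.continuousAt_iff] at hc0
    obtain ⟨δ', hδ', hd⟩ := hc0 (δ/(2*π+1)) (by positivity)
    refine ⟨min δ' 1, by positivity, fun {x} hx hdist => ?_⟩
    rw [Real.dist_eq, sub_zero, abs_of_pos hx, lt_min_iff] at hdist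
    have hx1 : |x| < 1 := by rw [abs_of_pos hx]; exact hdist.2
    have hi : IntervalIntegrable (fun θ : ℝ => u ((x:ℂ) * Complex.exp (θ*Complex.I)))
        volume 0 (2*π) := (hucont x hx1).intervalIntegrable _ _
    have hFx : F x - (2*π : ℝ) • u 0
        = ∫ θ in (0:ℝ)..(2*π), (u ((x:ℂ) * Complex.exp (θ*Complex.I)) - u 0) := by
      rw [intervalIntegral.integral_sub hi intervalIntegrable_const,
        intervalIntegral.integral_const, sub_zero]
    rw [dist_eq_norm, hFx]
    have hbd : ∀ θ ∈ Set.uIoc (0:ℝ) (2*π),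
        ‖u ((x:ℂ) * Complex.exp (θ*Complex.I)) - u 0‖ ≤ δ/(2*π+1) := by
      intro θ _
      have : dist ((x:ℂ) * Complex.exp (θ*Complex.I)) 0 < δ' := by
        rw [dist_zero_right, norm_mul, Complex.norm_real, Real.norm_eq_abs,
          Complex.norm_exp_ofReal_mul_I, mul_one, abs_of_pos hx]
        exact hdist.1
      exact (le_of_lt (by simpa [dist_eq_norm] using hd this))
    calc ‖∫ θ in (0:ℝ)..(2*π), (u ((x:ℂ) * Complex.exp (θ*Complex.I)) - u 0)‖
        ≤ δ/(2*π+1) * |2*π - 0| := intervalIntegral.norm_integral_le_of_norm_le_const hbd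
      _ < δ := by
          rw [sub_zero, abs_of_pos Real.two_pi_pos]
          rw [div_mul_eq_mul_div, div_lt_iff₀ (by positivity)]
          nlinarith [Real.two_pi_pos, hδ]
  have hlim2 : Filter.Tendsto F (nhdsWithin 0 (Set.Ioi (0:ℝ))) (nhds (F r)) := by
    apply Filter.Tendsto.congr' _ tendsto_const_nhds
    filter_upwards [Ioo_mem_nhdsGT_of_mem (Set.left_mem_Ico.2 zero_lt_one)] with s hs
    exact (hconst s hs).symm
  have hFr : F r = (2*π:ℝ) • u 0 := tendsto_nhds_unique hlim2 hlim
  show ((1 / (2 * π) : ℝ) : ℂ) * F r = u 0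
  rw [hFr, Complex.real_smul]
  push_cast
  have : (π : ℂ) ≠ 0 := by exact_mod_cast Real.pi_ne_zero
  field_simp

lemma polar_ball {E : Type*} [NormedAddCommGroup E] [NormedSpace ℝ E]
    {ψ : ℂ → E} (hψ : IntegrableOn ψ (ball (0:ℂ) 1) volume) :
    IntegrableOn (fun p : ℝ × ℝ => p.1 • ψ (Complex.polarCoord.symm p))
      (Set.Ioo (0:ℝ) 1 ×ˢ Set.Ioo (-π) π) volume ∧
    (∫ z in ball (0:ℂ) 1, ψ z)
      = ∫ p in Set.Ioo (0:ℝ) 1 ×ˢ Set.Ioo (-π) π, p.1 • ψ (Complex.polarCoord.symm p) := by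
  set e := Complex.measurableEquivRealProd with he_def
  have hmp : MeasurePreserving (⇑e.symm) volume volume :=
    Complex.volume_preserving_equiv_real_prod.symm
  have hemb : MeasurableEmbedding (⇑e.symm) := e.symm.measurableEmbedding
  set g : ℝ × ℝ → E := fun q => ψ (e.symm q) with hg_def
  set T : Set (ℝ × ℝ) := ⇑e.symm ⁻¹' (ball (0:ℂ) 1) with hT_def
  -- transfer to ℝ²
  have hint_T : IntegrableOn g T volume := by
    rw [hg_def, hT_def]
    exact (hmp.integrableOn_comp_preimage hemb).2 hψ
  have hI_T : (∫ q in T, g q) = ∫ z in ball (0:ℂ) 1, ψ z := by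
    rw [hg_def, hT_def]
    exact hmp.setIntegral_preimage_emb hemb _ _
  -- the symm of complex polar coords factors through e.symm
  have hfactor : ∀ p : ℝ × ℝ, e.symm (polarCoord.symm p) = Complex.polarCoord.symm p := by
    intro p
    rw [Complex.polarCoord_symm_apply]
    show Complex.mk (p.1 * Real.cos p.2) (p.1 * Real.sin p.2) = _
    apply Complex.ext <;>
      simp [← Complex.ofReal_cos, ← Complex.ofReal_sin]
  -- the image of s under polarCoord.symm
  set s : Set (ℝ × ℝ) := Set.Ioo (0:ℝ) 1 ×ˢ Set.Ioo (-π) π with hs_def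
  have hs_meas : MeasurableSet s := measurableSet_Ioo.prod measurableSet_Ioo
  have hs_sub : s ⊆ polarCoord.target := by
    rw [hs_def, polarCoord_target]
    exact Set.prod_mono Set.Ioo_subset_Ioi_self le_rfl
  have habs_mem : ∀ p : ℝ × ℝ, (polarCoord.symm p ∈ T ↔ |p.1| < 1) := by
    intro p
    rw [hT_def, Set.mem_preimage, hfactor, mem_ball, dist_zero_right,
      Complex.norm_polarCoord_symm]
  have himage : polarCoord.symm '' s = T ∩ polarCoord.source := by
    apply Set.Subset.antisymm
    · rintro x ⟨p, hp, rfl⟩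
      refine ⟨(habs_mem p).2 ?_, polarCoord.symm.map_source (hs_sub hp)⟩
      rw [abs_of_pos hp.1.1]
      exact hp.1.2
    · rintro x ⟨hxT, hxs⟩
      refine ⟨polarCoord x, ?_, polarCoord.left_inv hxs⟩
      have hpt : polarCoord x ∈ polarCoord.target := polarCoord.map_source hxs
      rw [polarCoord_target] at hpt
      have h1 : |(polarCoord x).1| < 1 := by
        have h2 := habs_mem (polarCoord x)
        rw [polarCoord.left_inv hxs] at h2
        exact h2.1 hxT
      constructor
      · exact ⟨hpt.1, by rwa [abs_of_pos hpt.1] at h1⟩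
      · exact hpt.2
  -- T is a.e. equal to T ∩ source
  have hnull : volume polarCoord.sourceᶜ = 0 := by
    have h := polarCoord_source_ae_eq_univ
    rwa [MeasureTheory.ae_eq_univ] at h
  have hTae : T =ᵐ[volume] ((T ∩ polarCoord.source : Set (ℝ × ℝ))) := by
    rw [MeasureTheory.ae_eq_set]
    constructor
    · refine measure_mono_null (fun x hx => ?_) hnull
      exact fun h => hx.2 ⟨hx.1, h⟩
    · rw [Set.diff_eq_empty.2 Set.inter_subset_left]
      exact measure_empty
  set B : ℝ × ℝ → ℝ × ℝ →L[ℝ] ℝ × ℝ := fun p =>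
    LinearMap.toContinuousLinearMap (Matrix.toLin (Module.Basis.finTwoProd ℝ) (Module.Basis.finTwoProd ℝ)
      !![Real.cos p.2, -p.1 * Real.sin p.2; Real.sin p.2, p.1 * Real.cos p.2]) with hB
  have hB' : ∀ p ∈ s, HasFDerivWithinAt polarCoord.symm (B p) s p := fun p _ =>
    (hasFDerivAt_polarCoord_symm p).hasFDerivWithinAt
  have hBdet : ∀ p ∈ s, |(B p).det| = p.1 := by
    intro p hp
    have hd : (B p).det = p.1 := by
      conv_rhs => rw [← one_mul p.1, ← Real.cos_sq_add_sin_sq p.2]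
      simp only [hB, neg_mul, LinearMap.det_toContinuousLinearMap, LinearMap.det_toLin,
        Matrix.det_fin_two_of, sub_neg_eq_add]
      ring
    rw [hd, abs_of_pos hp.1.1]
  have hinj : Set.InjOn polarCoord.symm s := polarCoord.symm.injOn.mono hs_sub
  have h_int_iff := integrableOn_image_iff_integrableOn_abs_det_fderiv_smul volume hs_meas hB' hinj g
  have h_int_eq := integral_image_eq_integral_abs_det_fderiv_smul volume hs_meas hB' hinj g
  have hrestrict : volume.restrict T = volume.restrict (polarCoord.symm '' s) := by
    rw [himage]; exact Measure.restrict_congr_set hTae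
  have hint_s : IntegrableOn (fun p => |(B p).det| • g (polarCoord.symm p)) s volume := by
    apply h_int_iff.1
    rwa [IntegrableOn, ← hrestrict]
  have hIs : (∫ q in T, g q) = ∫ p in s, |(B p).det| • g (polarCoord.symm p) := by
    calc ∫ q in T, g q = ∫ q in polarCoord.symm '' s, g q := by
          rw [himage]; exact setIntegral_congr_set hTae
      _ = _ := h_int_eq
  have heq : Set.EqOn (fun p => |(B p).det| • g (polarCoord.symm p))
      (fun p : ℝ × ℝ => p.1 • ψ (Complex.polarCoord.symm p)) s := by
    intro p hp
    simp only [hg_def]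
    rw [hBdet p hp, hfactor]
  constructor
  · exact (hint_s.congr_fun heq hs_meas)
  · rw [← hI_T, hIs]
    exact setIntegral_congr_fun hs_meas heq

section helpers
variable {E : Type*} [NormedAddCommGroup E] [NormedSpace ℝ E]

lemma periodic_circle_fun (f : ℂ → E) (r : ℝ) :
    Function.Periodic (fun θ : ℝ => f ((r:ℂ) * Complex.exp (θ*Complex.I))) (2*π) := by
  intro θ
  have : Complex.exp (((θ + 2*π : ℝ) : ℂ) * Complex.I) = Complex.exp ((θ:ℂ)*Complex.I) := by
    push_cast
    rw [add_mul, Complex.exp_add, Complex.exp_two_pi_mul_I, mul_one]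
  simp only [this]

lemma shift_interval {w : ℝ → E} (hw : Function.Periodic w (2*π)) :
    ∫ θ in (0:ℝ)..(2*π), w θ = ∫ θ in (-π)..π, w θ := by
  have h := hw.intervalIntegral_add_eq 0 (-π)
  rw [zero_add] at h
  rw [h]
  congr 1
  ring

lemma hsymm_exp (r θ : ℝ) :
    Complex.polarCoord.symm (r, θ) = (r:ℂ) * Complex.exp ((θ:ℂ)*Complex.I) := by
  rw [Complex.polarCoord_symm_apply, Complex.exp_mul_I]
  push_cast
  ring

end helpers

/-- Lemma 3.4: `∫_D |f − u| dA ≥ 2 ∫₀¹ |f♯(r) − u(0)| r dr` for every `u ∈ L¹_h(D)`. -/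
theorem stmt_5 (f u : ℂ → ℂ) (hf : Integrable f dA)
    (hu : HarmonicOnC u (ball (0 : ℂ) 1)) (hui : Integrable u dA) :
    2 * ∫ r in (0:ℝ)..1, ‖circMean f r - u 0‖ * r
      ≤ ∫ z, ‖f z - u z‖ ∂dA := by
  have hπ : (0:ℝ) < π := Real.pi_pos
  have hc_ne : (ENNReal.ofReal (1 / π)) ≠ 0 := by
    simp only [ne_eq, ENNReal.ofReal_eq_zero, not_le]
    positivity
  have hc_top : (ENNReal.ofReal (1 / π)) ≠ ⊤ := ENNReal.ofReal_ne_top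
  set v : ℂ → ℂ := fun z => f z - u z with hv_def
  have hvi : Integrable v dA := hf.sub hui
  have hvball : IntegrableOn v (ball (0:ℂ) 1) volume := by
    have h : Integrable v ((ENNReal.ofReal (1 / π)) • (volume.restrict (ball (0:ℂ) 1))) := hvi
    exact (integrable_smul_measure hc_ne hc_top).1 h
  set φ : ℂ → ℝ := fun z => ‖v z‖ with hφ_def
  have hφball : IntegrableOn φ (ball (0:ℂ) 1) volume := hvball.norm
  obtain ⟨hvp_int, -⟩ := polar_ball hvball
  obtain ⟨hφp_int, hφp_eq⟩ := polar_ball hφball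
  have hmeas_eq : (volume : Measure (ℝ×ℝ)).restrict (Set.Ioo (0:ℝ) 1 ×ˢ Set.Ioo (-π) π)
      = (volume.restrict (Set.Ioo (0:ℝ) 1)).prod (volume.restrict (Set.Ioo (-π) π)) := by
    rw [Measure.prod_restrict, ← Measure.volume_eq_prod]
  have hvp_int' : Integrable (fun p : ℝ × ℝ => p.1 • v (Complex.polarCoord.symm p))
      ((volume.restrict (Set.Ioo (0:ℝ) 1)).prod (volume.restrict (Set.Ioo (-π) π))) := by
    rw [← hmeas_eq]; exact hvp_int
  have hφp_int' : Integrable (fun p : ℝ × ℝ => p.1 • φ (Complex.polarCoord.symm p))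
      ((volume.restrict (Set.Ioo (0:ℝ) 1)).prod (volume.restrict (Set.Ioo (-π) π))) := by
    rw [← hmeas_eq]; exact hφp_int
  have hslice := hvp_int'.prod_right_ae
  have hφ_marg_int : Integrable (fun r => ∫ θ, r • φ (Complex.polarCoord.symm (r, θ))
      ∂(volume.restrict (Set.Ioo (-π) π))) (volume.restrict (Set.Ioo (0:ℝ) 1)) :=
    hφp_int'.integral_prod_left
  -- pointwise a.e. inequality
  have hae : ∀ᵐ r ∂(volume.restrict (Set.Ioo (0:ℝ) 1)),
      2 * (‖circMean f r - u 0‖ * r)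
        ≤ (1/π) * ∫ θ, r • φ (Complex.polarCoord.symm (r, θ))
            ∂(volume.restrict (Set.Ioo (-π) π)) := by
    filter_upwards [hslice, ae_restrict_mem measurableSet_Ioo] with r hr_int hr_mem
    set w : ℝ → ℂ := fun θ => v ((r:ℂ) * Complex.exp ((θ:ℂ)*Complex.I)) with hw_def
    have hw_eq : ∀ θ : ℝ, v (Complex.polarCoord.symm (r, θ)) = w θ := fun θ => by
      rw [hsymm_exp]
    have hw_int : IntegrableOn w (Set.Ioo (-π) π) volume := by
      have h2 := hr_int.smul (r⁻¹)
      have h3 : (fun θ : ℝ => r⁻¹ • (r • v (Complex.polarCoord.symm (r, θ)))) = w := by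
        funext θ
        rw [smul_smul, inv_mul_cancel₀ (ne_of_gt hr_mem.1), one_smul, hw_eq]
      have h2' : Integrable (fun θ : ℝ => r⁻¹ • (r • v (Complex.polarCoord.symm (r, θ))))
          (volume.restrict (Set.Ioo (-π) π)) := h2
      rwa [h3] at h2'
    have hw_ii : IntervalIntegrable w volume (-π) π := by
      rw [intervalIntegrable_iff_integrableOn_Ioc_of_le (by linarith)]
      rwa [integrableOn_Ioc_iff_integrableOn_Ioo]
    have hr1 : |r| < 1 := by
      rw [abs_of_pos hr_mem.1]; exact hr_mem.2
    have hu_cont : Continuous (fun θ : ℝ => u ((r:ℂ) * Complex.exp ((θ:ℂ)*Complex.I))) := by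
      apply hu.1.continuousOn.comp_continuous
      · exact continuous_const.mul
          (Complex.continuous_exp.comp (Complex.continuous_ofReal.mul continuous_const))
      · intro θ
        simp only [mem_ball, dist_zero_right, norm_mul, Complex.norm_real, Real.norm_eq_abs]
        rw [Complex.norm_exp_ofReal_mul_I, mul_one]
        exact hr1
    have hu_ii : IntervalIntegrable (fun θ : ℝ => u ((r:ℂ) * Complex.exp ((θ:ℂ)*Complex.I)))
        volume (-π) π := hu_cont.intervalIntegrable _ _
    have hcm_f : circMean f r = ((1/(2*π) : ℝ) : ℂ)
        * ∫ θ in (-π)..π, f ((r:ℂ) * Complex.exp ((θ:ℂ)*Complex.I)) := by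
      rw [circMean, shift_interval (periodic_circle_fun f r)]
    have hcm_u : circMean u r = ((1/(2*π) : ℝ) : ℂ)
        * ∫ θ in (-π)..π, u ((r:ℂ) * Complex.exp ((θ:ℂ)*Complex.I)) := by
      rw [circMean, shift_interval (periodic_circle_fun u r)]
    have hsplit : (∫ θ in (-π)..π, f ((r:ℂ) * Complex.exp ((θ:ℂ)*Complex.I)))
        = (∫ θ in (-π)..π, w θ)
          + ∫ θ in (-π)..π, u ((r:ℂ) * Complex.exp ((θ:ℂ)*Complex.I)) := by
      rw [← intervalIntegral.integral_add hw_ii hu_ii]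
      congr 1
      funext θ
      simp [hw_def, hv_def]
    have hu0 : circMean u r = u 0 := circMean_harmonic hu hr_mem
    have hdiff : circMean f r - u 0 = ((1/(2*π) : ℝ) : ℂ) * ∫ θ in (-π)..π, w θ := by
      rw [← hu0, hcm_f, hcm_u, hsplit]
      ring
    have hnorm : ‖circMean f r - u 0‖
        ≤ (1/(2*π)) * ∫ θ in (-π)..π, ‖w θ‖ := by
      rw [hdiff]
      rw [show ‖((1/(2*π) : ℝ) : ℂ) * ∫ θ in (-π)..π, w θ‖
          = ‖((1/(2*π) : ℝ) : ℂ)‖ * ‖∫ θ in (-π)..π, w θ‖ from by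
        rw [← norm_mul]]
      rw [Complex.norm_real, Real.norm_eq_abs, abs_of_pos (by positivity : (0:ℝ) < 1/(2*π))]
      exact mul_le_mul_of_nonneg_left
        (intervalIntegral.norm_integral_le_integral_norm (by linarith)) (by positivity)
    have hWnn : 0 ≤ ∫ θ in (-π)..π, ‖w θ‖ :=
      intervalIntegral.integral_nonneg (by linarith) (fun θ _ => norm_nonneg _)
    have hNr : (∫ θ, r • φ (Complex.polarCoord.symm (r, θ)) ∂(volume.restrict (Set.Ioo (-π) π)))
        = r * ∫ θ in (-π)..π, ‖w θ‖ := by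
      rw [intervalIntegral.integral_of_le (by linarith : -π ≤ π), integral_Ioc_eq_integral_Ioo]
      rw [show (fun θ : ℝ => r • φ (Complex.polarCoord.symm (r, θ)))
          = fun θ : ℝ => r • ‖w θ‖ from funext fun θ => by rw [hφ_def]; simp only [hw_eq]]
      rw [MeasureTheory.integral_smul]
      simp [smul_eq_mul]
    rw [hNr]
    have h1 := mul_le_mul_of_nonneg_right hnorm (le_of_lt hr_mem.1)
    have heq : 2 * ((1/(2*π)) * (∫ θ in (-π)..π, ‖w θ‖) * r)
        = (1/π) * (r * ∫ θ in (-π)..π, ‖w θ‖) := by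
      field_simp
    calc 2 * (‖circMean f r - u 0‖ * r)
        ≤ 2 * ((1/(2*π)) * (∫ θ in (-π)..π, ‖w θ‖) * r) := by linarith [h1]
      _ = (1/π) * (r * ∫ θ in (-π)..π, ‖w θ‖) := heq
  -- global assembly
  have hgoal_lhs : (2:ℝ) * ∫ r in (0:ℝ)..1, ‖circMean f r - u 0‖ * r
      = ∫ r, 2 * (‖circMean f r - u 0‖ * r)
          ∂(volume.restrict (Set.Ioo (0:ℝ) 1)) := by
    rw [intervalIntegral.integral_of_le zero_le_one, integral_Ioc_eq_integral_Ioo,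
      MeasureTheory.integral_const_mul]
  have hgoal_rhs : (∫ z, ‖f z - u z‖ ∂dA)
      = ∫ r, (1/π) * ∫ θ, r • φ (Complex.polarCoord.symm (r, θ))
          ∂(volume.restrict (Set.Ioo (-π) π)) ∂(volume.restrict (Set.Ioo (0:ℝ) 1)) := by
    have h1 : (∫ z, ‖f z - u z‖ ∂dA) = (1/π) * ∫ z in ball (0:ℂ) 1, φ z := by
      show (∫ z, ‖f z - u z‖
        ∂((ENNReal.ofReal (1 / π)) • (volume.restrict (ball (0:ℂ) 1)))) = _
      rw [MeasureTheory.integral_smul_measure, ENNReal.toReal_ofReal (by positivity)]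
      rw [smul_eq_mul]
    rw [h1, hφp_eq, show (volume : Measure (ℝ×ℝ)).restrict
        (Set.Ioo (0:ℝ) 1 ×ˢ Set.Ioo (-π) π)
      = (volume.restrict (Set.Ioo (0:ℝ) 1)).prod (volume.restrict (Set.Ioo (-π) π))
        from hmeas_eq, integral_prod _ hφp_int', ← MeasureTheory.integral_const_mul]
  rw [hgoal_lhs, hgoal_rhs]
  exact integral_mono_of_nonneg
    (by filter_upwards [ae_restrict_mem measurableSet_Ioo] with r hr;
        have h0 : (0:ℝ) ≤ ‖circMean f r - u 0‖ := norm_nonneg _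
        exact mul_nonneg (by norm_num) (mul_nonneg h0 (le_of_lt hr.1)))
    (hφ_marg_int.const_mul (1/π)) hae
end

section
/- Let p ≥ 1, let c > 0, and let f be holomorphic on D with |f(z)| ≥ c for all z ∈ D and with conj(f) ∈ L^p(D). Then ω := conj(f) is not badly approximable with respect to A^p; that is, there exists g ∈ A^p with ‖ω − g‖_p < ‖ω‖_p. -/
open MeasureTheory Metric Complex
open scoped ENNReal

lemma dA_ac : dA ≪ (volume : Measure ℂ).restrict (ball (0 : ℂ) 1) :=
  MeasureTheory.Measure.smul_absolutelyContinuous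

instance : IsFiniteMeasure dA := by
  constructor
  rw [dA, Measure.smul_apply, Measure.restrict_apply_univ, smul_eq_mul]
  exact ENNReal.mul_lt_top ENNReal.ofReal_lt_top measure_ball_lt_top

lemma dA_ne_zero : dA ≠ 0 := by
  rw [← Measure.measure_univ_ne_zero, dA, Measure.smul_apply,
    Measure.restrict_apply_univ, smul_eq_mul]
  exact mul_ne_zero (ENNReal.ofReal_pos.mpr (by positivity)).ne'
    (measure_ball_pos _ _ one_pos).ne'

lemma ae_mem_ball : ∀ᵐ z ∂dA, z ∈ ball (0 : ℂ) 1 :=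
  dA_ac.ae_le (ae_restrict_mem measurableSet_ball)

/-- Proposition 5.2: if `f` is holomorphic on the disk with `|f| ≥ c > 0`, then
`ω = conj(f)` is not badly approximable in `L^p` with respect to `A^p`. -/
theorem stmt_10 (p : ℝ) (hp : 1 ≤ p) (c : ℝ) (hc : 0 < c) (f : ℂ → ℂ)
    (hf : DifferentiableOn ℂ f (ball (0 : ℂ) 1))
    (hlb : ∀ z ∈ ball (0 : ℂ) 1, c ≤ ‖f z‖)
    (ω : ℂ → ℂ) (hω : ∀ z : ℂ, ω z = starRingEnd ℂ (f z))
    (hmem : MemLp ω (ENNReal.ofReal p) dA) :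
    ∃ g : ℂ → ℂ, MemAp p g ∧
      eLpNorm (ω - g) (ENNReal.ofReal p) dA < eLpNorm ω (ENNReal.ofReal p) dA := by
  have hp0 : (0 : ℝ) < p := lt_of_lt_of_le one_pos hp
  set g : ℂ → ℂ := fun z => (c : ℂ) ^ 2 / f z with hg
  have hfne : ∀ z ∈ ball (0 : ℂ) 1, f z ≠ 0 := fun z hz => by
    intro h
    have := hlb z hz
    rw [h] at this
    simp at this
    exact absurd this (not_le.mpr hc)
  -- pointwise strict inequality on the ball
  have key : ∀ z ∈ ball (0 : ℂ) 1, ‖ω z - g z‖ < ‖ω z‖ := by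
    intro z hz
    have hfz := hfne z hz
    have habs : 0 < ‖f z‖ := lt_of_lt_of_le hc (hlb z hz)
    have hc2 : c ^ 2 ≤ ‖f z‖ ^ 2 := by
      gcongr; exact (hlb z hz)
    have hdiff : ω z - g z = ((‖f z‖ ^ 2 - c ^ 2 : ℝ) : ℂ) / f z := by
      rw [hω z, hg]
      field_simp
      rw [Complex.conj_mul']
      push_cast
      rfl
    rw [hdiff, hω z, norm_div, Complex.norm_real, Real.norm_eq_abs, Complex.norm_conj]
    rw [_root_.abs_of_nonneg (by linarith), div_lt_iff₀ habs]
    nlinarith [sq_nonneg c]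
  -- g is in A^p
  have hg_cont : ContinuousOn g (ball (0 : ℂ) 1) :=
    (continuousOn_const.div hf.continuousOn hfne)
  have hg_diff : DifferentiableOn ℂ g (ball (0 : ℂ) 1) :=
    (differentiableOn_const _).div hf hfne
  have hg_meas : AEStronglyMeasurable g dA :=
    (hg_cont.aestronglyMeasurable measurableSet_ball).mono_ac dA_ac
  have hg_bdd : ∀ᵐ z ∂dA, ‖g z‖ ≤ c := by
    filter_upwards [ae_mem_ball] with z hz
    have habs : 0 < ‖f z‖ := lt_of_lt_of_le hc (hlb z hz)
    rw [hg]
    simp only [norm_div, norm_pow, Complex.norm_real, Real.norm_eq_abs,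
      _root_.abs_of_nonneg hc.le]
    rw [div_le_iff₀ habs]
    calc c ^ 2 = c * c := sq c
    _ ≤ c * ‖f z‖ := by gcongr; exact hlb z hz
  have hg_mem : MemLp g (ENNReal.ofReal p) dA := MemLp.of_bound hg_meas c hg_bdd
  refine ⟨g, ⟨hg_diff, hg_mem⟩, ?_⟩
  have hpne : (ENNReal.ofReal p) ≠ 0 := by
    simp [ENNReal.ofReal_eq_zero, not_le, hp0]
  have hpnt : (ENNReal.ofReal p) ≠ ∞ := ENNReal.ofReal_ne_top
  rw [eLpNorm_eq_lintegral_rpow_enorm_toReal hpne hpnt, eLpNorm_eq_lintegral_rpow_enorm_toReal hpne hpnt]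
  have htp : (ENNReal.ofReal p).toReal = p := ENNReal.toReal_ofReal hp0.le
  rw [htp]
  have hωmeas : AEMeasurable (fun z => (‖ω z‖₊ : ℝ≥0∞) ^ p) dA :=
    (hmem.aestronglyMeasurable.aemeasurable.nnnorm.coe_nnreal_ennreal).pow_const p
  have hlt : ∀ᵐ z ∂dA, (‖(ω - g) z‖₊ : ℝ≥0∞) ^ p < (‖ω z‖₊ : ℝ≥0∞) ^ p := by
    filter_upwards [ae_mem_ball] with z hz
    refine ENNReal.rpow_lt_rpow ?_ hp0
    have := key z hz
    rw [ENNReal.coe_lt_coe]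
    simpa [← NNReal.coe_lt_coe] using this
  have hfin : ∫⁻ z, (‖(ω - g) z‖₊ : ℝ≥0∞) ^ p ∂dA ≠ ∞ := by
    have hle : ∫⁻ z, (‖(ω - g) z‖₊ : ℝ≥0∞) ^ p ∂dA ≤ ∫⁻ z, (‖ω z‖₊ : ℝ≥0∞) ^ p ∂dA :=
      lintegral_mono_ae (hlt.mono fun z h => h.le)
    refine ne_top_of_le_ne_top ?_ hle
    have := hmem.eLpNorm_lt_top
    rw [eLpNorm_eq_lintegral_rpow_enorm_toReal hpne hpnt, htp] at this
    change (∫⁻ (x : ℂ), (‖ω x‖₊ : ℝ≥0∞) ^ p ∂dA) ^ (1 / p) < ∞ at this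
    intro h
    rw [h, ENNReal.top_rpow_of_pos (by positivity : (0:ℝ) < 1/p)] at this
    exact lt_irrefl _ this
  have := lintegral_strict_mono dA_ne_zero hωmeas hfin hlt
  exact ENNReal.rpow_lt_rpow this (by positivity)
end
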